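/- Let n be even. In R = Π_{Ã_{n-1}}, with s_1 = Σ_{i even}(α_i + α_{i+1}*), s_1' = Σ_{i odd}(α_i + α_{i+1}*), s_2 = Σ_{i even}(α_i α_{i+1} + α_{i+1}* α_i*), s_2' = Σ_{i odd}(α_i α_{i+1} + α_{i+1}* α_i*), the relations s_2 s_1 = s_1 s_2' and s_2' s_1' = s_1' s_2 hold. -/

import Mathlib

open scoped BigOperators

/-- Generators of the path algebra of the double of the extended Dynkin quiver Ã_{n-1}:
vertex idempotents `vtx i`, nonstar arrows `arr i : e_i → e_{i+1}`,
star arrows `star i : e_{i+1} → e_i`. -/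
inductive PPGen (n : ℕ) : Type
  | vtx (i : ZMod n)
  | arr (i : ZMod n)
  | star (i : ZMod n)

variable (K : Type) [Field K] (n : ℕ) [NeZero n]

abbrev PPFree := FreeAlgebra K (PPGen n)

noncomputable def E (i : ZMod n) : PPFree K n := FreeAlgebra.ι K (PPGen.vtx i)
noncomputable def A (i : ZMod n) : PPFree K n := FreeAlgebra.ι K (PPGen.arr i)
noncomputable def S (i : ZMod n) : PPFree K n := FreeAlgebra.ι K (PPGen.star i)

/-- Defining relations of the preprojective algebra Π_{Ã_{n-1}}: the path-algebra
relations for the double quiver, together with the preprojective relation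
Ω = Σ_i (α_i α_i* − α_i* α_i) = 0. -/
inductive PPRel : PPFree K n → PPFree K n → Prop
  | vtx_mul (i j : ZMod n) :
      PPRel (E K n i * E K n j) (if i = j then E K n i else 0)
  | vtx_sum : PPRel (∑ i : ZMod n, E K n i) 1
  | arr_left (i : ZMod n) : PPRel (E K n i * A K n i) (A K n i)
  | arr_right (i : ZMod n) : PPRel (A K n i * E K n (i + 1)) (A K n i)
  | arr_left' (i j : ZMod n) : j ≠ i → PPRel (E K n j * A K n i) 0
  | arr_right' (i j : ZMod n) : j ≠ i + 1 → PPRel (A K n i * E K n j) 0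
  | star_left (i : ZMod n) : PPRel (E K n (i + 1) * S K n i) (S K n i)
  | star_right (i : ZMod n) : PPRel (S K n i * E K n i) (S K n i)
  | star_left' (i j : ZMod n) : j ≠ i + 1 → PPRel (E K n j * S K n i) 0
  | star_right' (i j : ZMod n) : j ≠ i → PPRel (S K n i * E K n j) 0
  | preproj :
      PPRel (∑ i : ZMod n, (A K n i * S K n i - S K n i * A K n i)) 0

/-- The preprojective algebra Π_{Ã_{n-1}}. -/
abbrev Preproj := RingQuot (PPRel K n)

/-- The canonical projection from the free algebra onto Π_{Ã_{n-1}}. -/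
noncomputable def pp : PPFree K n →ₐ[K] Preproj K n := RingQuot.mkAlgHom K (PPRel K n)

/-- `aPath i ℓ` is the pure nonstar path α_i α_{i+1} ⋯ α_{i+ℓ-1} (with `aPath i 0 = e_i`). -/
noncomputable def aPath (i : ZMod n) : ℕ → PPFree K n
  | 0 => E K n i
  | (ℓ + 1) => A K n i * aPath (i + 1) ℓ

/-- `sPath j m` is the pure star path α_{j-1}* α_{j-2}* ⋯ α_{j-m}* starting at vertex j
(with `sPath j 0 = e_j`). -/
noncomputable def sPath (j : ZMod n) : ℕ → PPFree K n
  | 0 => E K n j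
  | (m + 1) => S K n (j - 1) * sPath (j - 1) m

/-- The canonical-form path with source e_i consisting of ℓ nonstar arrows followed by
m star arrows, as an element of Π_{Ã_{n-1}}. -/
noncomputable def cpath (i : ZMod n) (ℓ m : ℕ) : Preproj K n :=
  pp K n (aPath K n i ℓ * sPath K n (i + (ℓ : ZMod n)) m)

/-- The orbit sum O(ℓ,m): the sum over all paths in B_{ℓ,m} = Q_ℓQ_m* ∪ Q_mQ_ℓ*. -/
noncomputable def OO (ℓ m : ℕ) : Preproj K n :=
  if ℓ = m then ∑ i : ZMod n, cpath K n i ℓ ℓ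
  else ∑ i : ZMod n, (cpath K n i ℓ m + cpath K n i m ℓ)

variable (m : ℕ)

/-- The even vertex index 2j in ZMod n (n = 2m even). -/
def ev (j : Fin m) : ZMod n := ((2 * (j : ℕ) : ℕ) : ZMod n)

/-- s_1 = Σ_{i even} (α_i + α_{i+1}*). -/
noncomputable def s1e : Preproj K n :=
  ∑ j : Fin m, pp K n (A K n (ev n m j) + S K n (ev n m j + 1))

/-- s_1' = Σ_{i odd} (α_i + α_{i+1}*). -/
noncomputable def s1o : Preproj K n :=
  ∑ j : Fin m, pp K n (A K n (ev n m j + 1) + S K n (ev n m j + 2))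

/-- s_2 = Σ_{i even} (α_i α_{i+1} + α_{i+1}* α_i*). -/
noncomputable def s2e : Preproj K n :=
  ∑ j : Fin m, pp K n (A K n (ev n m j) * A K n (ev n m j + 1) +
    S K n (ev n m j + 1) * S K n (ev n m j))

/-- s_2' = Σ_{i odd} (α_i α_{i+1} + α_{i+1}* α_i*). -/
noncomputable def s2o : Preproj K n :=
  ∑ j : Fin m, pp K n (A K n (ev n m j + 1) * A K n (ev n m j + 2) +
    S K n (ev n m j + 2) * S K n (ev n m j + 1))


section Aux

lemma pprel {x y : PPFree K n} (h : PPRel K n x y) : pp K n x = pp K n y :=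
  RingQuot.mkAlgHom_rel K h

noncomputable def pa (i : ZMod n) : Preproj K n := pp K n (A K n i)
noncomputable def ps (i : ZMod n) : Preproj K n := pp K n (S K n i)
noncomputable def pe (i : ZMod n) : Preproj K n := pp K n (E K n i)

lemma pa_pe (i : ZMod n) : pa K n i * pe K n (i + 1) = pa K n i := by
  rw [pa, pe, ← map_mul]; exact pprel K n (PPRel.arr_right i)

lemma ps_pe (i : ZMod n) : ps K n i * pe K n i = ps K n i := by
  rw [ps, pe, ← map_mul]; exact pprel K n (PPRel.star_right i)

lemma pe_pa (i : ZMod n) : pe K n i * pa K n i = pa K n i := by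
  rw [pa, pe, ← map_mul]; exact pprel K n (PPRel.arr_left i)

lemma pe_ps (i : ZMod n) : pe K n (i + 1) * ps K n i = ps K n i := by
  rw [ps, pe, ← map_mul]; exact pprel K n (PPRel.star_left i)

lemma pe_pa' (i j : ZMod n) (h : j ≠ i) : pe K n j * pa K n i = 0 := by
  rw [pa, pe, ← map_mul, pprel K n (PPRel.arr_left' i j h), map_zero]

lemma pa_pe' (i j : ZMod n) (h : j ≠ i + 1) : pa K n i * pe K n j = 0 := by
  rw [pa, pe, ← map_mul, pprel K n (PPRel.arr_right' i j h), map_zero]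

lemma pe_ps' (i j : ZMod n) (h : j ≠ i + 1) : pe K n j * ps K n i = 0 := by
  rw [ps, pe, ← map_mul, pprel K n (PPRel.star_left' i j h), map_zero]

lemma ps_pe' (i j : ZMod n) (h : j ≠ i) : ps K n i * pe K n j = 0 := by
  rw [ps, pe, ← map_mul, pprel K n (PPRel.star_right' i j h), map_zero]

lemma pa_pa (i j : ZMod n) (h : j ≠ i + 1) : pa K n i * pa K n j = 0 := by
  rw [← pa_pe K n i, mul_assoc, pe_pa' K n j (i + 1) h.symm, mul_zero]

lemma pa_ps (i j : ZMod n) (h : j ≠ i) : pa K n i * ps K n j = 0 := by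
  rw [← pa_pe K n i, mul_assoc, pe_ps' K n j (i + 1) (fun hh => h (add_right_cancel hh).symm), mul_zero]

lemma ps_pa (i j : ZMod n) (h : j ≠ i) : ps K n i * pa K n j = 0 := by
  rw [← ps_pe K n i, mul_assoc, pe_pa' K n j i h.symm, mul_zero]

lemma ps_ps (i j : ZMod n) (h : j + 1 ≠ i) : ps K n i * ps K n j = 0 := by
  rw [← ps_pe K n i, mul_assoc, pe_ps' K n j i h.symm, mul_zero]

lemma loop (i : ZMod n) :
    pa K n i * ps K n i = ps K n (i - 1) * pa K n (i - 1) := by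
  have h0 : (∑ k : ZMod n, (pa K n k * ps K n k - ps K n k * pa K n k)) = 0 := by
    have h := pprel K n (PPRel.preproj (K := K) (n := n))
    simpa [pa, ps, map_sum, map_mul, map_sub] using h
  have h1 : (∑ k : ZMod n,
      (pe K n i * (pa K n k * ps K n k) * pe K n i
        - pe K n i * (ps K n k * pa K n k) * pe K n i)) = 0 := by
    have := congrArg (fun z => pe K n i * z * pe K n i) h0
    simpa [Finset.mul_sum, Finset.sum_mul, mul_sub, sub_mul, mul_assoc] using this
  rw [Finset.sum_sub_distrib] at h1
  have hA : (∑ k : ZMod n, pe K n i * (pa K n k * ps K n k) * pe K n i)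
      = pa K n i * ps K n i := by
    rw [Finset.sum_eq_single i]
    · rw [← mul_assoc, pe_pa, mul_assoc, ps_pe]
    · intro k _ hk
      rw [← mul_assoc, pe_pa' K n k i (Ne.symm hk), zero_mul, zero_mul]
    · simp
  have hB : (∑ k : ZMod n, pe K n i * (ps K n k * pa K n k) * pe K n i)
      = ps K n (i - 1) * pa K n (i - 1) := by
    rw [Finset.sum_eq_single (i - 1)]
    · obtain ⟨u, rfl⟩ : ∃ u, u + 1 = i := ⟨i - 1, sub_add_cancel i 1⟩
      rw [add_sub_cancel_right, ← mul_assoc, pe_ps, mul_assoc, pa_pe]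
    · intro k _ hk
      have : i ≠ k + 1 := fun hh => hk (by rw [hh]; ring)
      rw [← mul_assoc, pe_ps' K n k i this, zero_mul, zero_mul]
    · simp
  rw [hA, hB, sub_eq_zero] at h1
  exact h1

end Aux

section Ev

lemma ev_inj (hn : n = 2 * m) {j k : Fin m} (h : ev n m j = ev n m k) : j = k := by
  rw [ev, ev, ZMod.natCast_eq_natCast_iff, hn] at h
  have h2 : (j : ℕ) ≡ (k : ℕ) [MOD m] := Nat.ModEq.mul_left_cancel' two_ne_zero h
  exact Fin.ext (by rwa [Nat.ModEq, Nat.mod_eq_of_lt j.isLt, Nat.mod_eq_of_lt k.isLt] at h2)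

lemma ev_succ [NeZero m] (hn : n = 2 * m) (j : Fin m) :
    ev n m (j + 1) = ev n m j + 2 := by
  rw [ev, ev]
  have h2 : ((2 * ((j : ℕ) + 1) : ℕ) : ZMod n) = ((2 * (j : ℕ) : ℕ) : ZMod n) + 2 := by
    push_cast; ring
  rw [← h2, ZMod.natCast_eq_natCast_iff, hn]
  have : ((j + 1 : Fin m) : ℕ) = ((j : ℕ) + 1) % m := by
    rw [Fin.add_def]; simp [Fin.val_one']
  rw [this]
  exact Nat.ModEq.mul_left' 2 (Nat.mod_modEq _ m)

lemma ev_eq_iff (hn : n = 2 * m) {j k : Fin m} : ev n m j = ev n m k ↔ j = k :=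
  ⟨ev_inj n m hn, fun h => h ▸ rfl⟩

end Ev

section Inner
set_option linter.unusedSectionVars false

lemma loop_succ (i : ZMod n) :
    pa K n (i + 1) * ps K n (i + 1) = ps K n i * pa K n i := by
  have h := loop K n (i + 1)
  rwa [add_sub_cancel_right] at h

lemma evc_ne (hn : n = 2 * m) (c : ZMod n) {j k : Fin m} (h : k ≠ j) :
    ev n m k + c ≠ ev n m j + c :=
  fun hh => h (ev_inj n m hn (add_right_cancel hh))

lemma evc_ne1 (hn : n = 2 * m) (c : ZMod n) {j k : Fin m} (h : k ≠ j) :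
    ev n m k + c + 1 ≠ ev n m j + c + 1 :=
  fun hh => evc_ne n m hn c h (add_right_cancel hh)

lemma ev_succ_c [NeZero m] (hn : n = 2 * m) (c : ZMod n) (j : Fin m) :
    ev n m (j + 1) + c = ev n m j + c + 2 := by
  rw [ev_succ n m hn]; ring

lemma ev_pred_c [NeZero m] (hn : n = 2 * m) (c : ZMod n) (j : Fin m) :
    ev n m (j - 1) + c + 2 = ev n m j + c := by
  rw [← ev_succ_c n m hn c (j - 1), sub_add_cancel]

lemma innerL [NeZero m] (hn : n = 2 * m) (c : ZMod n) (j : Fin m) :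
    (∑ k : Fin m, (pa K n (ev n m j + c) * pa K n (ev n m j + c + 1)
        + ps K n (ev n m j + c + 1) * ps K n (ev n m j + c)) *
      (pa K n (ev n m k + c) + ps K n (ev n m k + c + 1))) =
    (pa K n (ev n m j + c) * pa K n (ev n m j + c + 1) * pa K n (ev n m (j + 1) + c)
      + ps K n (ev n m j + c + 1) * ps K n (ev n m j + c) * pa K n (ev n m j + c))
      + (pa K n (ev n m j + c) * pa K n (ev n m j + c + 1) * ps K n (ev n m j + c + 1)
      + ps K n (ev n m j + c + 1) * ps K n (ev n m j + c) * ps K n (ev n m (j - 1) + c + 1)) := by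
  simp only [add_mul, mul_add, Finset.sum_add_distrib]
  congr 1
  · congr 1
    · refine Finset.sum_eq_single (j + 1) (fun k _ hk => ?_) (fun h => absurd (Finset.mem_univ _) h)
      have h : ev n m k + c ≠ ev n m j + c + 1 + 1 := by
        rw [show ev n m j + c + 1 + 1 = ev n m (j + 1) + c from by
          rw [ev_succ_c n m hn c j]; ring]
        exact evc_ne n m hn c hk
      rw [mul_assoc, pa_pa K n _ _ h, mul_zero]
    · refine Finset.sum_eq_single j (fun k _ hk => ?_) (fun h => absurd (Finset.mem_univ _) h)
      rw [mul_assoc, ps_pa K n _ _ (evc_ne n m hn c hk), mul_zero]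
  · congr 1
    · refine Finset.sum_eq_single j (fun k _ hk => ?_) (fun h => absurd (Finset.mem_univ _) h)
      rw [mul_assoc, pa_ps K n _ _ (evc_ne1 n m hn c hk), mul_zero]
    · refine Finset.sum_eq_single (j - 1) (fun k _ hk => ?_) (fun h => absurd (Finset.mem_univ _) h)
      have h : ev n m k + c + 1 + 1 ≠ ev n m j + c := by
        rw [show ev n m k + c + 1 + 1 = ev n m (k + 1) + c from by
          rw [ev_succ_c n m hn c k]; ring]
        exact evc_ne n m hn c (fun hh => hk (eq_sub_of_add_eq hh))
      rw [mul_assoc, ps_ps K n _ _ h, mul_zero]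

lemma innerR [NeZero m] (hn : n = 2 * m) (c : ZMod n) (j : Fin m) :
    (∑ k : Fin m, (pa K n (ev n m j + c) + ps K n (ev n m j + c + 1)) *
      (pa K n (ev n m k + c + 1) * pa K n (ev n m k + c + 2)
        + ps K n (ev n m k + c + 2) * ps K n (ev n m k + c + 1))) =
    (pa K n (ev n m j + c) * (pa K n (ev n m j + c + 1) * pa K n (ev n m j + c + 2))
      + ps K n (ev n m j + c + 1) * (pa K n (ev n m j + c + 1) * pa K n (ev n m j + c + 2)))
      + (pa K n (ev n m j + c) * (ps K n (ev n m (j - 1) + c + 2) * ps K n (ev n m (j - 1) + c + 1))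
      + ps K n (ev n m j + c + 1) * (ps K n (ev n m (j - 1) + c + 2) * ps K n (ev n m (j - 1) + c + 1))) := by
  simp only [add_mul, mul_add, Finset.sum_add_distrib]
  congr 1
  · congr 1
    · refine Finset.sum_eq_single j (fun k _ hk => ?_) (fun h => absurd (Finset.mem_univ _) h)
      rw [← mul_assoc, pa_pa K n _ _ (evc_ne1 n m hn c hk), zero_mul]
    · refine Finset.sum_eq_single j (fun k _ hk => ?_) (fun h => absurd (Finset.mem_univ _) h)
      rw [← mul_assoc, ps_pa K n _ _ (evc_ne1 n m hn c hk), zero_mul]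
  · congr 1
    · refine Finset.sum_eq_single (j - 1) (fun k _ hk => ?_) (fun h => absurd (Finset.mem_univ _) h)
      have h : ev n m k + c + 2 ≠ ev n m j + c := by
        rw [show ev n m k + c + 2 = ev n m (k + 1) + c from (ev_succ_c n m hn c k).symm]
        exact evc_ne n m hn c (fun hh => hk (eq_sub_of_add_eq hh))
      rw [← mul_assoc, pa_ps K n _ _ h, zero_mul]
    · refine Finset.sum_eq_single (j - 1) (fun k _ hk => ?_) (fun h => absurd (Finset.mem_univ _) h)
      have h : ev n m k + c + 2 + 1 ≠ ev n m j + c + 1 := by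
        intro hh
        have h2 : ev n m k + c + 2 = ev n m j + c := add_right_cancel hh
        rw [show ev n m k + c + 2 = ev n m (k + 1) + c from (ev_succ_c n m hn c k).symm] at h2
        exact evc_ne n m hn c (fun hh2 => hk (eq_sub_of_add_eq hh2)) h2
      rw [← mul_assoc, ps_ps K n _ _ h, zero_mul]

end Inner

section Key
set_option linter.unusedSectionVars false

lemma loop_succ2 (x : ZMod n) :
    ps K n (x + 1) * pa K n (x + 1) = pa K n (x + 2) * ps K n (x + 2) := by
  have h := (loop_succ K n (x + 1)).symm
  rwa [show x + 1 + 1 = x + 2 from by ring] at h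

lemma Gpt (x : ZMod n) :
    (pa K n x * pa K n (x + 1) * pa K n (x + 2) + ps K n (x + 1) * ps K n x * pa K n x)
      + (pa K n x * pa K n (x + 1) * ps K n (x + 1)
        + ps K n (x + 1) * ps K n x * ps K n (x - 1)) =
    (pa K n x * (pa K n (x + 1) * pa K n (x + 2))
      + ps K n (x + 1) * (ps K n x * ps K n (x - 1)))
      + (pa K n x * (ps K n x * pa K n x)
        + ps K n (x + 1) * (pa K n (x + 1) * ps K n (x + 1))) := by
  have h1 : pa K n x * pa K n (x + 1) * ps K n (x + 1)
      = pa K n x * (ps K n x * pa K n x) := by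
    rw [mul_assoc, loop_succ]
  have h2 : ps K n (x + 1) * ps K n x * pa K n x
      = ps K n (x + 1) * (pa K n (x + 1) * ps K n (x + 1)) := by
    rw [mul_assoc, loop_succ]
  rw [h1, h2, mul_assoc, mul_assoc]
  abel

lemma Hpt (x : ZMod n) :
    (pa K n x * (pa K n (x + 1) * pa K n (x + 2))
      + ps K n (x + 1) * (pa K n (x + 1) * pa K n (x + 2)))
      + (pa K n x * (ps K n x * ps K n (x - 1))
        + ps K n (x + 1) * (ps K n x * ps K n (x - 1))) =
    (pa K n x * (pa K n (x + 1) * pa K n (x + 2))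
      + ps K n (x + 1) * (ps K n x * ps K n (x - 1)))
      + (ps K n (x - 1) * (pa K n (x - 1) * ps K n (x - 1))
        + pa K n (x + 2) * (ps K n (x + 2) * pa K n (x + 2))) := by
  have h1 : pa K n x * (ps K n x * ps K n (x - 1))
      = ps K n (x - 1) * (pa K n (x - 1) * ps K n (x - 1)) := by
    rw [← mul_assoc, loop, mul_assoc]
  have h2 : ps K n (x + 1) * (pa K n (x + 1) * pa K n (x + 2))
      = pa K n (x + 2) * (ps K n (x + 2) * pa K n (x + 2)) := by
    rw [← mul_assoc, loop_succ2, mul_assoc]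
  rw [h1, h2]
  abel

lemma ev_pred_c1 [NeZero m] (hn : n = 2 * m) (c : ZMod n) (j : Fin m) :
    ev n m (j - 1) + c + 1 = ev n m j + c - 1 := by
  refine eq_sub_of_add_eq ?_
  rw [show ev n m (j - 1) + c + 1 + 1 = ev n m (j - 1) + c + 2 from by ring,
    ev_pred_c n m hn]

lemma key [NeZero m] (hn : n = 2 * m) (c : ZMod n) :
    (∑ j : Fin m, (pa K n (ev n m j + c) * pa K n (ev n m j + c + 1)
        + ps K n (ev n m j + c + 1) * ps K n (ev n m j + c))) *
      (∑ j : Fin m, (pa K n (ev n m j + c) + ps K n (ev n m j + c + 1))) =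
    (∑ j : Fin m, (pa K n (ev n m j + c) + ps K n (ev n m j + c + 1))) *
      (∑ j : Fin m, (pa K n (ev n m j + c + 1) * pa K n (ev n m j + c + 2)
        + ps K n (ev n m j + c + 2) * ps K n (ev n m j + c + 1))) := by
  rw [Fintype.sum_mul_sum, Fintype.sum_mul_sum]
  calc
    ∑ j : Fin m, ∑ k : Fin m,
        (pa K n (ev n m j + c) * pa K n (ev n m j + c + 1)
          + ps K n (ev n m j + c + 1) * ps K n (ev n m j + c)) *
        (pa K n (ev n m k + c) + ps K n (ev n m k + c + 1))
      = ∑ j : Fin m,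
        ((pa K n (ev n m j + c) * (pa K n (ev n m j + c + 1) * pa K n (ev n m j + c + 2))
          + ps K n (ev n m j + c + 1) * (ps K n (ev n m j + c) * ps K n (ev n m j + c - 1)))
        + (pa K n (ev n m j + c) * (ps K n (ev n m j + c) * pa K n (ev n m j + c))
          + ps K n (ev n m j + c + 1)
            * (pa K n (ev n m j + c + 1) * ps K n (ev n m j + c + 1)))) := by
        refine Finset.sum_congr rfl (fun j _ => ?_)
        rw [innerL K n m hn c j, ev_succ_c n m hn c j, ev_pred_c1 n m hn c j]
        exact Gpt K n (ev n m j + c)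
    _ = ∑ j : Fin m,
        ((pa K n (ev n m j + c) * (pa K n (ev n m j + c + 1) * pa K n (ev n m j + c + 2))
          + ps K n (ev n m j + c + 1) * (ps K n (ev n m j + c) * ps K n (ev n m j + c - 1)))
        + (ps K n (ev n m j + c - 1)
            * (pa K n (ev n m j + c - 1) * ps K n (ev n m j + c - 1))
          + pa K n (ev n m j + c + 2)
            * (ps K n (ev n m j + c + 2) * pa K n (ev n m j + c + 2)))) := by
        simp only [Finset.sum_add_distrib]
        congr 1
        rw [add_comm (∑ j : Fin m, pa K n (ev n m j + c)
          * (ps K n (ev n m j + c) * pa K n (ev n m j + c)))]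
        congr 1
        · refine Fintype.sum_equiv (Equiv.addRight (1 : Fin m)) _ _ (fun j => ?_)
          show _ = ps K n (ev n m (j + 1) + c - 1)
            * (pa K n (ev n m (j + 1) + c - 1) * ps K n (ev n m (j + 1) + c - 1))
          rw [show ev n m (j + 1) + c - 1 = ev n m j + c + 1 from by
            rw [ev_succ_c n m hn c j]; ring]
        · refine Fintype.sum_equiv (Equiv.subRight (1 : Fin m)) _ _ (fun j => ?_)
          show _ = pa K n (ev n m (j - 1) + c + 2)
            * (ps K n (ev n m (j - 1) + c + 2) * pa K n (ev n m (j - 1) + c + 2))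
          rw [ev_pred_c n m hn c j]
    _ = ∑ j : Fin m, ∑ k : Fin m,
        (pa K n (ev n m j + c) + ps K n (ev n m j + c + 1)) *
        (pa K n (ev n m k + c + 1) * pa K n (ev n m k + c + 2)
          + ps K n (ev n m k + c + 2) * ps K n (ev n m k + c + 1)) := by
        refine Finset.sum_congr rfl (fun j _ => ?_)
        rw [innerR K n m hn c j, ev_pred_c n m hn c j, ev_pred_c1 n m hn c j]
        exact (Hpt K n (ev n m j + c)).symm

end Key

/-- for n = 2m even, in Π_{Ã_{n-1}} the relations s_2 s_1 = s_1 s_2'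
and s_2' s_1' = s_1' s_2 hold. -/
theorem statement16 (hm : 2 ≤ m) (hn : n = 2 * m) :
    s2e K n m * s1e K n m = s1e K n m * s2o K n m ∧
    s2o K n m * s1o K n m = s1o K n m * s2e K n m := by
  haveI : NeZero m := ⟨by omega⟩
  have h11 : ∀ x : ZMod n, x + 1 + 1 = x + 2 := fun x => by ring
  have h12 : ∀ x : ZMod n, x + 1 + 2 = x + 3 := fun x => by ring
  have h23 : ∀ x : ZMod n, x + 2 + 1 = x + 3 := fun x => by ring
  have hpred : ∀ j : Fin m, ev n m (j - 1) + 2 = ev n m j := fun j => by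
    have h := ev_pred_c n m hn 0 j
    simpa using h
  have hs1e : s1e K n m = ∑ j : Fin m, (pa K n (ev n m j) + ps K n (ev n m j + 1)) := by
    simp only [s1e, pa, ps, map_add]
  have hs1o : s1o K n m
      = ∑ j : Fin m, (pa K n (ev n m j + 1) + ps K n (ev n m j + 2)) := by
    simp only [s1o, pa, ps, map_add]
  have hs2e : s2e K n m = ∑ j : Fin m, (pa K n (ev n m j) * pa K n (ev n m j + 1)
      + ps K n (ev n m j + 1) * ps K n (ev n m j)) := by
    simp only [s2e, pa, ps, map_add, map_mul]
  have hs2o : s2o K n m = ∑ j : Fin m, (pa K n (ev n m j + 1) * pa K n (ev n m j + 2)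
      + ps K n (ev n m j + 2) * ps K n (ev n m j + 1)) := by
    simp only [s2o, pa, ps, map_add, map_mul]
  have hshift : (∑ j : Fin m, (pa K n (ev n m j) * pa K n (ev n m j + 1)
      + ps K n (ev n m j + 1) * ps K n (ev n m j)))
      = ∑ j : Fin m, (pa K n (ev n m j + 2) * pa K n (ev n m j + 3)
      + ps K n (ev n m j + 3) * ps K n (ev n m j + 2)) := by
    refine Fintype.sum_equiv (Equiv.subRight (1 : Fin m)) _ _ (fun j => ?_)
    show _ = pa K n (ev n m (j - 1) + 2) * pa K n (ev n m (j - 1) + 3)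
      + ps K n (ev n m (j - 1) + 3) * ps K n (ev n m (j - 1) + 2)
    rw [show ev n m (j - 1) + 3 = ev n m j + 1 from by rw [← hpred j]; ring, hpred j]
  constructor
  · have h0 := key K n m hn 0
    simp only [add_zero] at h0
    rw [hs1e, hs2e, hs2o]
    exact h0
  · have h1 := key K n m hn 1
    simp only [h11, h12, h23] at h1
    rw [hs1o, hs2o, hs2e, hshift]
    exact h1
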